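/- Let c_− ∈ P_− and u ∈ W with u(θ) ∈ R_− such that c' = c_− + u(θ) ∈ P_−, where θ is the highest short root. Then there exists c in the W-orbit of c_− such that c' = c_− − u_c(θ) = b_− where b = θ + s_θ(c), i.e., c' can be reached from c_− by a single 'arrow' of type (ii) (application of the affine simple reflection s₀ in the π-decomposition). -/

import Mathlib

open scoped RealInnerProductSpace Pointwise BigOperators

noncomputable section

/-- Euclidean `n`-space, the ambient space of the root system. -/
abbrev V (n : ℕ) := EuclideanSpace ℝ (Fin n)

/-- An element `w ∘ b'` of the extended affine Weyl group `Ŵ = W ⋉ P'`: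
`w` is the (finite) Weyl-group part, `b` the translation part. -/
structure ExtElem (n : ℕ) where
  w : V n ≃ₗᵢ[ℝ] V n
  b : V n

namespace ExtElem

variable {n : ℕ}

/-- The identity element of `Ŵ`. -/
def one : ExtElem n := ⟨LinearIsometryEquiv.refl ℝ (V n), 0⟩

/-- Multiplication in `Ŵ`: `(w₁ b₁')·(w₂ b₂') = (w₁w₂)((w₂⁻¹ b₁ + b₂)')`. -/
def mul (x y : ExtElem n) : ExtElem n := ⟨y.w.trans x.w, y.w.symm x.b + y.b⟩

/-- Inversion in `Ŵ`. -/
def inv (x : ExtElem n) : ExtElem n := ⟨x.w.symm, -(x.w x.b)⟩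

/-- The action of `Ŵ` on affine roots `[z, ζ]`:  `(w b')([z,ζ]) = [w z, ζ − (z,b)]`. -/
def act (x : ExtElem n) (p : V n × ℝ) : V n × ℝ := (x.w p.1, p.2 - ⟪p.1, x.b⟫)

/-- The affine action of `Ŵ` on `ℝⁿ`: `(w b')((z)) = w(z + b)`. -/
def affAct (x : ExtElem n) (z : V n) : V n := x.w (z + x.b)

/-- A Weyl group element `w` viewed in `Ŵ`. -/
def we (u : V n ≃ₗᵢ[ℝ] V n) : ExtElem n := ⟨u, 0⟩

/-- A translation `b'` viewed in `Ŵ`. -/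
def tr (b : V n) : ExtElem n := ⟨LinearIsometryEquiv.refl ℝ (V n), b⟩

end ExtElem

variable {n : ℕ}

/-- `ν_α = (α,α)/2`. -/
def nuv (α : V n) : ℝ := ⟪α, α⟫ / 2

/-- The coroot pairing `(b, α∨) = 2(b,α)/(α,α)`. -/
def pairv (b α : V n) : ℝ := 2 * ⟪b, α⟫ / ⟪α, α⟫

/-- The positive affine roots `R̃₊ = R₊ ∪ {[α, ν_α j] : α ∈ R, j > 0}`, realized as
pairs `(α, m)` with `m ∈ ν_α ℤ`. -/
def AffPlus (R Rplus : Set (V n)) : Set (V n × ℝ) :=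
  {p | p.1 ∈ R ∧ (∃ j : ℤ, p.2 = nuv p.1 * j) ∧ (0 < p.2 ∨ (p.2 = 0 ∧ p.1 ∈ Rplus))}

/-- `λ(ŵ) = R̃₊ ∩ ŵ⁻¹(R̃₋)`. -/
def lamSet (R Rplus : Set (V n)) (x : ExtElem n) : Set (V n × ℝ) :=
  AffPlus R Rplus ∩ {p | x.act p ∈ -AffPlus R Rplus}

/-- The length `l(ŵ) = |λ(ŵ)|`. -/
noncomputable def len (R Rplus : Set (V n)) (x : ExtElem n) : ℕ :=
  (lamSet R Rplus x).ncard

/-- Membership in the weight lattice `P`: `(α∨, b) ∈ ℤ` for all roots. -/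
def inLat (R : Set (V n)) (b : V n) : Prop :=
  ∀ α ∈ R, ∃ m : ℤ, ⟪α, b⟫ = nuv α * m

/-- Reflections `s_α`, `α ∈ R`. -/
def IsReflection (R : Set (V n)) (g : V n ≃ₗᵢ[ℝ] V n) : Prop :=
  ∃ α ∈ R, ∀ z, g z = z - pairv z α • α

/-- The Weyl group `W`, generated by the reflections `s_α`, `α ∈ R`. -/
def Weyl (R : Set (V n)) : Subgroup (V n ≃ₗᵢ[ℝ] V n) :=
  Subgroup.closure {g | IsReflection R g}

/-- `π_b = b·u_b⁻¹ = u_b⁻¹ ∘ (u_b b)' ∈ Ŵ` for `u ∈ W`. -/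
def piE (u : V n ≃ₗᵢ[ℝ] V n) (b : V n) : ExtElem n := ⟨u.symm, u b⟩

/-- `u = u_b`: the shortest element of `W` with `u(b) = b₋ ∈ P₋`, characterized by
`u(b)` antidominant together with `α ∈ λ(u) ⇒ (α, b) ≠ 0`. -/
def IsUb (R Rplus : Set (V n)) (b : V n) (u : V n ≃ₗᵢ[ℝ] V n) : Prop :=
  u ∈ Weyl R ∧ (∀ α ∈ Rplus, ⟪u b, α⟫ ≤ 0) ∧
    ∀ α ∈ Rplus, u α ∈ -Rplus → ⟪α, b⟫ ≠ 0

end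

section OrbitAux

variable {n : ℕ}

/-- The reflection `s_α` as a linear isometry equivalence. -/
noncomputable def sRef (α : V n) : V n ≃ₗᵢ[ℝ] V n := Submodule.reflection (ℝ ∙ α)ᗮ

lemma sRef_apply (α z : V n) : sRef α z = z - pairv z α • α := by
  rcases eq_or_ne α 0 with rfl | hα
  · rw [sRef, Submodule.reflection_apply,
      Submodule.starProjection_eq_self_iff.mpr (by simp), two_smul]
    simp
  · rw [sRef, Submodule.reflection_apply, Submodule.starProjection_orthogonal_val,
      Submodule.starProjection_singleton, pairv]
    have h2 : (‖α‖^2 : ℝ) = ⟪α, α⟫ := (real_inner_self_eq_norm_sq α).symm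
    have hn : ⟪α, α⟫ ≠ 0 := inner_self_ne_zero.mpr hα
    rw [real_inner_comm α z]
    rw [show (((‖α‖^2 :ℝ) : ℝ)) = ⟪α,α⟫ from h2]
    rw [two_smul]
    match_scalars <;> field_simp <;> ring_nf <;> simp

lemma sRef_sRef (α z : V n) : sRef α (sRef α z) = z := Submodule.reflection_reflection _ z

lemma sRef_symm (α : V n) : (sRef α).symm = sRef α := Submodule.reflection_symm

lemma sRef_inv (α : V n) : (sRef α)⁻¹ = sRef α := by
  ext z
  rw [LinearIsometryEquiv.coe_inv, sRef_symm]

lemma sRef_self (α : V n) (hα : α ≠ 0) : sRef α α = -α := by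
  have hn : ⟪α, α⟫ ≠ 0 := inner_self_ne_zero.mpr hα
  rw [sRef_apply, pairv]
  rw [show (2 : ℝ) * ⟪α, α⟫ / ⟪α, α⟫ = 2 by rw [mul_div_assoc, div_self hn, mul_one]]
  rw [two_smul]; abel

lemma sRef_fix (α z : V n) (h : ⟪z, α⟫ = 0) : sRef α z = z := by
  rw [sRef_apply, pairv, h]
  simp

lemma sRef_isReflection {R : Set (V n)} (α : V n) (hα : α ∈ R) :
    IsReflection R (sRef α) := ⟨α, hα, fun z => sRef_apply α z⟩

lemma sRef_mem_weyl {R : Set (V n)} (α : V n) (hα : α ∈ R) :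
    sRef α ∈ Weyl R :=
  Subgroup.subset_closure (sRef_isReflection α hα)

lemma weyl_maps {R : Set (V n)} (hrefl : ∀ α ∈ R, ∀ β ∈ R, β - pairv β α • α ∈ R)
    {g : V n ≃ₗᵢ[ℝ] V n} (hg : g ∈ Weyl R) : ∀ γ ∈ R, g γ ∈ R ∧ g.symm γ ∈ R := by
  have key : ∀ γ ∈ R, g γ ∈ R ∧ g⁻¹ γ ∈ R := by
    induction hg using Subgroup.closure_induction with
    | mem x hx =>
      obtain ⟨α, hαR, hform⟩ := hx
      have hxs : x = sRef α := by
        ext z; rw [hform z, sRef_apply]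
      subst hxs
      intro γ hγ
      refine ⟨by rw [sRef_apply]; exact hrefl α hαR γ hγ, ?_⟩
      rw [sRef_inv, sRef_apply]
      exact hrefl α hαR γ hγ
    | one => intro γ hγ; constructor <;> simpa using hγ
    | mul x y hx hy ihx ihy =>
      intro γ hγ
      constructor
      · have := (ihx (y γ) (ihy γ hγ).1).1
        simpa [LinearIsometryEquiv.coe_mul] using this
      · have := (ihy (x⁻¹ γ) (ihx γ hγ).2).2
        rw [mul_inv_rev]
        simpa [LinearIsometryEquiv.coe_mul] using this
    | inv x hx ihx =>
      intro γ hγ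
      exact ⟨(ihx γ hγ).2, by simpa using (ihx γ hγ).1⟩
  intro γ hγ
  refine ⟨(key γ hγ).1, ?_⟩
  have := (key γ hγ).2
  rwa [LinearIsometryEquiv.coe_inv] at this

/-- The key length-decrease counting lemma: if `w δ` is a negative root for a positive
root `δ`, then `w ∘ s_δ` has strictly fewer inversions than `w`. -/
lemma inv_decrease {R Rplus : Set (V n)} (hfin : R.Finite)
    (hR : R = Rplus ∪ (-Rplus)) (hdisj : Disjoint Rplus (-Rplus))
    (h0 : (0 : V n) ∉ R)
    (hrefl : ∀ α ∈ R, ∀ β ∈ R, β - pairv β α • α ∈ R)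
    (hpos : ∃ z : V n, ∀ α ∈ Rplus, 0 < ⟪z, α⟫)
    (w : V n ≃ₗᵢ[ℝ] V n) (hw : ∀ γ ∈ R, w γ ∈ R)
    (δ : V n) (hδ : δ ∈ Rplus) (hwδ : w δ ∈ -Rplus) :
    {γ ∈ Rplus | w (sRef δ γ) ∈ -Rplus}.ncard < {γ ∈ Rplus | w γ ∈ -Rplus}.ncard := by
  classical
  obtain ⟨z, hz⟩ := hpos
  set s := sRef δ with hs
  have hδR : δ ∈ R := hR ▸ Or.inl hδ
  have hδ0 : δ ≠ 0 := fun h => h0 (h ▸ hδR)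
  have hsδ : s δ = -δ := sRef_self δ hδ0
  have hss : ∀ x, s (s x) = x := sRef_sRef δ
  set A := {γ ∈ Rplus | w (s γ) ∈ -Rplus} with hA
  set B := {γ ∈ Rplus | w γ ∈ -Rplus} with hB
  have hBsub : B ⊆ R := fun x hx => hR ▸ Or.inl hx.1
  have hBfin : B.Finite := hfin.subset hBsub
  have hδB : δ ∈ B := ⟨hδ, hwδ⟩
  set f : V n → V n := fun γ => if s γ ∈ Rplus then s γ else γ with hf
  have hneg : ∀ x : V n, x ∈ R → x ∉ Rplus → x ∈ -Rplus := by
    intro x hxR hx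
    rcases (hR ▸ hxR : x ∈ Rplus ∪ -Rplus) with h | h
    · exact absurd h hx
    · exact h
  have hmapsto : ∀ γ ∈ A, f γ ∈ B \ {δ} := by
    rintro γ ⟨hγp, hγw⟩
    by_cases hc : s γ ∈ Rplus
    · rw [hf]; simp only [if_pos hc]
      refine ⟨⟨hc, hγw⟩, ?_⟩
      intro h
      rw [Set.mem_singleton_iff] at h
      have hγeq : γ = -δ := by rw [← hss γ, h, hsδ]
      have : γ ∈ -Rplus := Set.mem_neg.mpr (by rw [hγeq, neg_neg]; exact hδ)
      exact Set.disjoint_left.mp hdisj hγp this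
    · rw [hf]; simp only [if_neg hc]
      have hγR : γ ∈ R := hR ▸ Or.inl hγp
      have hγδ : γ ≠ δ := by
        intro h
        subst h
        rw [hsδ, map_neg] at hγw
        have : w γ ∈ Rplus := by
          have := Set.mem_neg.mp hγw
          rwa [neg_neg] at this
        exact Set.disjoint_left.mp hdisj this hwδ
      have hsγR : s γ ∈ R := by rw [hs, sRef_apply]; exact hrefl δ hδR γ hγR
      have hsγneg : s γ ∈ -Rplus := hneg _ hsγR hc
      have hγ'p : -(s γ) ∈ Rplus := Set.mem_neg.mp hsγneg
      have key1 : -(s γ) = pairv γ δ • δ - γ := by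
        rw [hs, sRef_apply]; abel
      have hzγ : 0 < ⟪z, γ⟫ := hz γ hγp
      have hzγ' : 0 < ⟪z, -(s γ)⟫ := hz _ hγ'p
      have hzδ : 0 < ⟪z, δ⟫ := hz δ hδ
      have hsum : ⟪z, -(s γ)⟫ = pairv γ δ * ⟪z, δ⟫ - ⟪z, γ⟫ := by
        rw [key1, inner_sub_right, real_inner_smul_right]
      have hp : 0 < pairv γ δ := by nlinarith
      have hwγ' : w (-(s γ)) ∈ Rplus := by
        rw [map_neg]
        exact Set.mem_neg.mp hγw
      have hzwδ : ⟪z, w δ⟫ < 0 := by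
        have : 0 < ⟪z, -(w δ)⟫ := hz _ (Set.mem_neg.mp hwδ)
        rw [inner_neg_right] at this; linarith
      have hzwγ' : 0 < ⟪z, w (-(s γ))⟫ := hz _ hwγ'
      have hkey2 : w (-(s γ)) = pairv γ δ • w δ - w γ := by
        rw [key1, map_sub, map_smul]
      have hzwγ : ⟪z, w γ⟫ < 0 := by
        have := congrArg (fun x => ⟪z, x⟫) hkey2
        simp only [inner_sub_right, real_inner_smul_right] at this
        nlinarith
      have hwγR : w γ ∈ R := hw γ hγR
      have hwγnp : w γ ∉ Rplus := fun h => absurd (hz _ h) (by linarith)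
      refine ⟨⟨hγp, hneg _ hwγR hwγnp⟩, ?_⟩
      intro h
      exact hγδ (Set.mem_singleton_iff.mp h)
  have hinj : Set.InjOn f A := by
    rintro γ₁ ⟨h₁p, _⟩ γ₂ ⟨h₂p, _⟩ heq
    rw [hf] at heq
    by_cases h1 : s γ₁ ∈ Rplus <;> by_cases h2 : s γ₂ ∈ Rplus
    · simp only [if_pos h1, if_pos h2] at heq
      rw [← hss γ₁, heq, hss]
    · simp only [if_pos h1, if_neg h2] at heq
      exact absurd (by rw [← heq, hss]; exact h₁p) h2
    · simp only [if_neg h1, if_pos h2] at heq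
      exact absurd (by rw [heq, hss]; exact h₂p) h1
    · simpa only [if_neg h1, if_neg h2] using heq
  calc A.ncard ≤ (B \ {δ}).ncard :=
        Set.ncard_le_ncard_of_injOn f hmapsto hinj (hBfin.subset Set.diff_subset)
    _ < B.ncard := Set.ncard_diff_singleton_lt_of_mem hδB hBfin

end OrbitAux

/-- Let `c₋ ∈ P₋` and `u ∈ W` with `u(θ) ∈ R₋` be such that `c' = c₋ + u(θ) ∈ P₋`,
where `θ` is the highest short root.  Then there is a `c` in the `W`-orbit of `c₋`
such that `c' = c₋ − u_c(θ) = b₋` for `b = θ + s_θ(c)`; i.e. `c'` is reached from `c₋`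
by a single arrow of type (ii). -/
theorem orbit_theta_arrow (n : ℕ) (R Rplus : Set (V n))
    (hfin : R.Finite) (hR : R = Rplus ∪ (-Rplus)) (hdisj : Disjoint Rplus (-Rplus))
    (h0 : (0 : V n) ∉ R)
    (hrefl : ∀ α ∈ R, ∀ β ∈ R, β - pairv β α • α ∈ R)
    (hcart : ∀ α ∈ R, ∀ β ∈ R, ∃ m : ℤ, pairv β α = m)
    (hpos : ∃ v : V n, ∀ α ∈ Rplus, 0 < ⟪v, α⟫)
    (hirr : ∀ S T : Set (V n), S ∪ T = R → (∀ a ∈ S, ∀ b ∈ T, ⟪a, b⟫ = 0) →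
      S = ∅ ∨ T = ∅)
    (hshort : ∀ α ∈ R, 2 ≤ ⟪α, α⟫)
    -- `θ`: the highest short root (the dominant short positive root)
    (θ : V n) (hθ : θ ∈ Rplus) (hθ2 : ⟪θ, θ⟫ = 2)
    (hθdom : ∀ α ∈ Rplus, 0 ≤ ⟪θ, α⟫)
    (cminus : V n) (hcm : ∀ α ∈ Rplus, ⟪cminus, α⟫ ≤ 0)
    (u : V n ≃ₗᵢ[ℝ] V n) (hu : u ∈ Weyl R) (huθ : u θ ∈ -Rplus)
    (hc' : ∀ α ∈ Rplus, ⟪cminus + u θ, α⟫ ≤ 0) :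
    ∃ c : V n, ∃ v : V n ≃ₗᵢ[ℝ] V n, v ∈ Weyl R ∧
      v c = cminus ∧
      (∀ α ∈ Rplus, v α ∈ -Rplus → ⟪α, c⟫ ≠ 0) ∧
      cminus + u θ = cminus - v θ ∧
      (∃ w ∈ Weyl R, w (θ + (c - ⟪c, θ⟫ • θ)) = cminus + u θ) := by
  classical
  have hθR : θ ∈ R := hR ▸ Or.inl hθ
  have hθ0 : θ ≠ 0 := fun h => h0 (h ▸ hθR)
  set β := -(u θ) with hβdef
  have hβp : β ∈ Rplus := Set.mem_neg.mp huθ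
  set N : (V n ≃ₗᵢ[ℝ] V n) → ℕ := fun v => {γ ∈ Rplus | v.symm γ ∈ -Rplus}.ncard with hN
  have hv0 : (u * sRef θ) ∈ Weyl R ∧ (u * sRef θ) θ = β := by
    refine ⟨mul_mem hu (sRef_mem_weyl θ hθR), ?_⟩
    rw [LinearIsometryEquiv.coe_mul, Function.comp_apply, sRef_self θ hθ0, map_neg]
  set K : Set ℕ := {k | ∃ v : V n ≃ₗᵢ[ℝ] V n, (v ∈ Weyl R ∧ v θ = β) ∧ N v = k} with hK
  have hKne : K.Nonempty := ⟨N (u * sRef θ), u * sRef θ, hv0, rfl⟩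
  obtain ⟨v, ⟨hvW, hvθ⟩, hvN⟩ := Nat.sInf_mem hKne
  have hmin : ∀ v' : V n ≃ₗᵢ[ℝ] V n, v' ∈ Weyl R → v' θ = β → N v ≤ N v' := by
    intro v' h1 h2
    rw [hvN]
    exact Nat.sInf_le ⟨v', ⟨h1, h2⟩, rfl⟩
  refine ⟨v.symm cminus, v, hvW, v.apply_symm_apply cminus, ?_, ?_, ?_⟩
  · -- the u_c condition
    intro α hα hvα hinner
    set δ := -(v α) with hδdef
    have hδp : δ ∈ Rplus := Set.mem_neg.mp hvα
    have hδR : δ ∈ R := hR ▸ Or.inl hδp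
    have hδ0 : δ ≠ 0 := fun h => h0 (h ▸ hδR)
    have hsymmδ : v.symm δ = -α := by rw [hδdef, map_neg, v.symm_apply_apply]
    have hwδ : v.symm δ ∈ -Rplus := by
      rw [hsymmδ]
      exact Set.mem_neg.mpr (by rwa [neg_neg])
    have hδc : ⟪δ, cminus⟫ = 0 := by
      have e := v.inner_map_map α (v.symm cminus)
      rw [v.apply_symm_apply, hinner] at e
      rw [hδdef, inner_neg_left, e, neg_zero]
    have h1 : ⟪δ, β⟫ ≤ 0 := by
      have e := v.inner_map_map (v.symm δ) θ
      rw [v.apply_symm_apply, hvθ, hsymmδ] at e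
      rw [e, inner_neg_left]
      have h4 := hθdom α hα
      have h5 := real_inner_comm α θ
      linarith
    have h2 : 0 ≤ ⟪δ, β⟫ := by
      have hcd : ⟪cminus, δ⟫ = 0 := by rw [real_inner_comm]; exact hδc
      have h3 := hc' δ hδp
      rw [inner_add_left, hcd, zero_add] at h3
      rw [hβdef, inner_neg_right, real_inner_comm]
      linarith
    have hδβ : ⟪δ, β⟫ = 0 := le_antisymm h1 h2
    have hv'W : (sRef δ * v) ∈ Weyl R := mul_mem (sRef_mem_weyl δ hδR) hvW
    have hv'θ : (sRef δ * v) θ = β := by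
      rw [LinearIsometryEquiv.coe_mul, Function.comp_apply, hvθ]
      exact sRef_fix δ β (by rwa [real_inner_comm])
    have heq : ∀ γ, (sRef δ * v).symm γ = v.symm (sRef δ γ) := by
      intro γ
      rw [← LinearIsometryEquiv.coe_inv, mul_inv_rev, LinearIsometryEquiv.coe_mul,
        Function.comp_apply, LinearIsometryEquiv.coe_inv, LinearIsometryEquiv.coe_inv,
        sRef_symm]
    have hlt : N (sRef δ * v) < N v := by
      rw [hN]
      simp only
      rw [show {γ ∈ Rplus | (sRef δ * v).symm γ ∈ -Rplus}
          = {γ ∈ Rplus | v.symm (sRef δ γ) ∈ -Rplus} by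
        ext x; simp only [Set.mem_setOf_eq, heq]]
      exact inv_decrease hfin hR hdisj h0 hrefl hpos v.symm
        (fun γ hγ => (weyl_maps hrefl hvW γ hγ).2) δ hδp hwδ
    exact absurd (hmin _ hv'W hv'θ) (by omega)
  · rw [hvθ, hβdef, sub_neg_eq_add]
  · refine ⟨v * sRef θ, mul_mem hvW (sRef_mem_weyl θ hθR), ?_⟩
    rw [LinearIsometryEquiv.coe_mul, Function.comp_apply]
    have hstep : sRef θ (θ + (v.symm cminus - ⟪v.symm cminus, θ⟫ • θ))
        = v.symm cminus - θ := by
      rw [sRef_apply]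
      have hp : pairv (θ + (v.symm cminus - ⟪v.symm cminus, θ⟫ • θ)) θ
          = 2 - ⟪v.symm cminus, θ⟫ := by
        rw [pairv, inner_add_left, inner_sub_left, real_inner_smul_left, hθ2]
        ring
      rw [hp]
      match_scalars <;> ring
    rw [hstep, map_sub, v.apply_symm_apply, hvθ, hβdef, sub_neg_eq_add]
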